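/- arXiv:2605.03769 — 2 statements merged into one kernel-verified Lean document; each statement's English description precedes it below -/
import Mathlib

section
/- Let f : ℝ^{m×n} → ℝ be differentiable, let w be a real m×n matrix with all rows nonzero, let v be any real m×n matrix, and set G := P^{r⊥}_w(∇f(w)), e := v − ∇f(w), and d := RN(P^{r⊥}_w(v)). Then ⟨∇f(w), d⟩ ≥ ‖G‖_F − (√m + 1)‖e‖_F. -/
open scoped BigOperators RealInnerProductSpace
open Finset MeasureTheory

noncomputable section

/-- The space of real m×n matrices with the Frobenius (Euclidean) norm and inner product. -/
abbrev Mat (m n : ℕ) := EuclideanSpace ℝ (Fin m × Fin n)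

/-- The i-th row of a matrix. -/
def row {m n : ℕ} (x : Mat m n) (i : Fin m) : Fin n → ℝ := fun j => x (i, j)

/-- Euclidean inner product of two rows. -/
def rdot {n : ℕ} (x y : Fin n → ℝ) : ℝ := ∑ j, x j * y j

/-- Euclidean norm of a row. -/
def rnorm {n : ℕ} (x : Fin n → ℝ) : ℝ := Real.sqrt (rdot x x)

/-- Row-wise perpendicular projection: each row of `x` is projected onto the
orthogonal complement of the corresponding row of `w`. -/
def Pperp {m n : ℕ} (w x : Mat m n) : Mat m n :=
  WithLp.toLp 2 (fun p => x p - (rdot (row x p.1) (row w p.1) / (rnorm (row w p.1)) ^ 2) * w p)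

/-- Row-wise normalization, with the convention 0/0 = 0. -/
def RN {m n : ℕ} (x : Mat m n) : Mat m n :=
  WithLp.toLp 2 (fun p => if row x p.1 = 0 then 0 else x p / rnorm (row x p.1))

/-- The (1,2)-norm: sum of Euclidean norms of the rows. -/
def norm12 {m n : ℕ} (x : Mat m n) : ℝ := ∑ i, rnorm (row x i)

/-- The (∞,2)-norm: maximum of Euclidean norms of the rows. -/
def normInf2 {m n : ℕ} (x : Mat m n) : ℝ := ⨆ i, rnorm (row x i)

namespace Aux
variable {n : ℕ}

lemma rdot_self_nonneg (x : Fin n → ℝ) : 0 ≤ rdot x x :=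
  Finset.sum_nonneg fun j _ => mul_self_nonneg _

lemma rnorm_nonneg (x : Fin n → ℝ) : 0 ≤ rnorm x := Real.sqrt_nonneg _

lemma rnorm_sq (x : Fin n → ℝ) : rnorm x ^ 2 = rdot x x :=
  Real.sq_sqrt (rdot_self_nonneg x)

lemma rdot_self_pos {x : Fin n → ℝ} (hx : x ≠ 0) : 0 < rdot x x := by
  obtain ⟨j, hj⟩ := Function.ne_iff.mp hx
  exact Finset.sum_pos' (fun k _ => mul_self_nonneg _)
    ⟨j, Finset.mem_univ j, mul_self_pos.mpr hj⟩

lemma rnorm_zero : rnorm (0 : Fin n → ℝ) = 0 := by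
  simp [rnorm, rdot]

lemma rdot_comm (x y : Fin n → ℝ) : rdot x y = rdot y x := by
  simp [rdot, mul_comm]

lemma rdot_sub_left (x y z : Fin n → ℝ) : rdot (x - y) z = rdot x z - rdot y z := by
  simp [rdot, sub_mul, Finset.sum_sub_distrib]

lemma rdot_sub_right (x y z : Fin n → ℝ) : rdot x (y - z) = rdot x y - rdot x z := by
  rw [rdot_comm, rdot_sub_left, rdot_comm y x, rdot_comm z x]

lemma rdot_smul_left (c : ℝ) (x y : Fin n → ℝ) : rdot (c • x) y = c * rdot x y := by
  simp [rdot, Finset.mul_sum, mul_assoc]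

lemma rdot_smul_right (c : ℝ) (x y : Fin n → ℝ) : rdot x (c • y) = c * rdot x y := by
  rw [rdot_comm, rdot_smul_left, rdot_comm]

lemma rnorm_smul (c : ℝ) (x : Fin n → ℝ) : rnorm (c • x) = |c| * rnorm x := by
  rw [rnorm, rdot_smul_left, rdot_smul_right, ← mul_assoc, ← sq, Real.sqrt_mul (sq_nonneg c),
    Real.sqrt_sq_eq_abs, rnorm]

lemma rdot_le (x y : Fin n → ℝ) : rdot x y ≤ rnorm x * rnorm y := by
  have h := Finset.sum_mul_sq_le_sq_mul_sq Finset.univ x y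
  have h2 : rdot x y ≤ Real.sqrt ((∑ j, x j ^ 2) * (∑ j, y j ^ 2)) := by
    calc rdot x y ≤ |rdot x y| := le_abs_self _
    _ = Real.sqrt ((rdot x y) ^ 2) := (Real.sqrt_sq_eq_abs _).symm
    _ ≤ _ := Real.sqrt_le_sqrt (by exact_mod_cast h)
  rw [Real.sqrt_mul (by positivity)] at h2
  convert h2 using 3 <;> simp [rnorm, rdot, sq]

/-- Per-row projection. -/
def pr (w x : Fin n → ℝ) : Fin n → ℝ := x - (rdot x w / rnorm w ^ 2) • w

/-- Per-row normalization. -/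
def dn (u : Fin n → ℝ) : Fin n → ℝ := if u = 0 then 0 else (rnorm u)⁻¹ • u

lemma rdot_pr_w {w : Fin n → ℝ} (hw : w ≠ 0) (x : Fin n → ℝ) : rdot (pr w x) w = 0 := by
  have ht : rdot w w ≠ 0 := ne_of_gt (rdot_self_pos hw)
  rw [pr, rdot_sub_left, rdot_smul_left, rnorm_sq]
  field_simp
  ring

lemma pr_sub (w x y : Fin n → ℝ) : pr w (x - y) = pr w x - pr w y := by
  funext j
  simp only [pr, rdot_sub_left, Pi.sub_apply, Pi.smul_apply, smul_eq_mul]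
  ring

lemma rdot_pr_self_le {w : Fin n → ℝ} (hw : w ≠ 0) (x : Fin n → ℝ) :
    rdot (pr w x) (pr w x) ≤ rdot x x := by
  have ht : 0 < rdot w w := rdot_self_pos hw
  have : rdot (pr w x) (pr w x) = rdot x x - (rdot x w) ^ 2 / rdot w w := by
    simp only [pr, rdot_sub_left, rdot_sub_right, rdot_smul_left, rdot_smul_right,
      rnorm_sq, rdot_comm w x]
    field_simp
    ring
  rw [this]
  have : 0 ≤ (rdot x w) ^ 2 / rdot w w := by positivity
  linarith

lemma rnorm_pr_le {w : Fin n → ℝ} (hw : w ≠ 0) (x : Fin n → ℝ) :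
    rnorm (pr w x) ≤ rnorm x :=
  Real.sqrt_le_sqrt (rdot_pr_self_le hw x)

lemma rnorm_dn_le_one (u : Fin n → ℝ) : rnorm (dn u) ≤ 1 := by
  rw [dn]
  split_ifs with h
  · simp [rnorm_zero]
  · have hp : 0 < rnorm u := Real.sqrt_pos.mpr (rdot_self_pos h)
    rw [rnorm_smul, abs_of_nonneg (inv_nonneg.mpr (rnorm_nonneg u)),
      inv_mul_cancel₀ hp.ne']

lemma rdot_dn_self (u : Fin n → ℝ) : rdot u (dn u) = rnorm u := by
  rw [dn]
  split_ifs with h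
  · simp [h, rnorm_zero, rdot, Pi.zero_apply]
  · have hp : 0 < rnorm u := Real.sqrt_pos.mpr (rdot_self_pos h)
    rw [rdot_smul_right, ← rnorm_sq, sq]
    field_simp

lemma rdot_w_dn {w : Fin n → ℝ} (hw : w ≠ 0) (v : Fin n → ℝ) :
    rdot w (dn (pr w v)) = 0 := by
  rw [dn]
  split_ifs with h
  · simp [rdot]
  · rw [rdot_smul_right, rdot_comm, rdot_pr_w hw, mul_zero]

/-- The per-row key inequality. -/
lemma row_main {w : Fin n → ℝ} (hw : w ≠ 0) (g v : Fin n → ℝ) :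
    rnorm (pr w v) - rnorm (v - g) ≤ rdot g (dn (pr w v)) := by
  set d := dn (pr w v) with hd
  have h1 : rdot g d = rdot (pr w g) d := by
    have : rdot (g - pr w g) d = 0 := by
      have : g - pr w g = (rdot g w / rnorm w ^ 2) • w := by
        funext j; simp [pr]
      rw [this, rdot_smul_left, rdot_w_dn hw, mul_zero]
    have h2 := rdot_sub_left g (pr w g) d
    rw [this] at h2
    linarith
  have h3 : pr w g = pr w v - pr w (v - g) := by
    rw [pr_sub]; abel
  have h4 : rdot (pr w (v - g)) d ≤ rnorm (v - g) := by
    calc rdot (pr w (v - g)) d ≤ rnorm (pr w (v - g)) * rnorm d := rdot_le _ _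
    _ ≤ rnorm (v - g) * 1 := by
        apply mul_le_mul (rnorm_pr_le hw _) (rnorm_dn_le_one _) (rnorm_nonneg _)
          (rnorm_nonneg _)
    _ = rnorm (v - g) := mul_one _
  have h5 : rdot (pr w v) d = rnorm (pr w v) := rdot_dn_self _
  rw [h1, h3, rdot_sub_left, h5]
  linarith

end Aux

namespace Aux
variable {m n : ℕ}

lemma row_Pperp (w x : Mat m n) (i : Fin m) :
    row (Pperp w x) i = pr (row w i) (row x i) := by
  funext j; rfl

lemma row_RN (x : Mat m n) (i : Fin m) : row (RN x) i = dn (row x i) := by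
  funext j
  simp only [row, RN, dn]
  split_ifs with h
  · rfl
  · simp [div_eq_inv_mul, row]

lemma row_sub (x y : Mat m n) (i : Fin m) : row (x - y) i = row x i - row y i := rfl

lemma inner_eq (x y : Mat m n) : ⟪x, y⟫ = ∑ i, rdot (row x i) (row y i) := by
  rw [PiLp.inner_apply]
  simp only [RCLike.inner_apply, conj_trivial]
  rw [Fintype.sum_prod_type]
  exact Finset.sum_congr rfl fun i _ => Finset.sum_congr rfl fun j _ => mul_comm _ _

lemma norm_eq (x : Mat m n) : ‖x‖ = Real.sqrt (∑ i, rdot (row x i) (row x i)) := by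
  rw [EuclideanSpace.norm_eq]
  congr 1
  rw [Fintype.sum_prod_type]
  simp [rdot, row, sq, Real.norm_eq_abs, abs_mul_abs_self]

lemma Pperp_sub (w x y : Mat m n) : Pperp w (x - y) = Pperp w x - Pperp w y := by
  ext p
  show Pperp w (x - y) p = Pperp w x p - Pperp w y p
  have h := congrFun (pr_sub (row w p.1) (row x p.1) (row y p.1)) p.2
  simp only [pr, Pi.sub_apply, Pi.smul_apply, smul_eq_mul] at h
  have hrow : row (x - y) p.1 = row x p.1 - row y p.1 := rfl
  simp only [Pperp, hrow]
  exact h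

end Aux

/-- Projected inner-product lower bound in the Frobenius norm. -/
theorem projected_inner_lower_bound_frobenius {m n : ℕ} (f : Mat m n → ℝ)
    (gradf : Mat m n → Mat m n) (hdiff : ∀ u, HasGradientAt f (gradf u) u)
    (w : Mat m n) (hw : ∀ i, row w i ≠ 0) (v : Mat m n) :
    ⟪gradf w, RN (Pperp w v)⟫ ≥
      ‖Pperp w (gradf w)‖ - (Real.sqrt m + 1) * ‖v - gradf w‖ := by
  classical
  set e : Mat m n := v - gradf w with he
  rw [ge_iff_le, Aux.inner_eq]
  -- per-row inequality
  have hrow : ∀ i ∈ Finset.univ, rnorm (row (Pperp w v) i) - rnorm (row e i) ≤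
      rdot (row (gradf w) i) (row (RN (Pperp w v)) i) := by
    intro i _
    rw [Aux.row_RN, Aux.row_Pperp]
    have h := Aux.row_main (hw i) (row (gradf w) i) (row v i)
    have hre : row e i = row v i - row (gradf w) i := rfl
    rw [hre]
    exact h
  have hsum : ∑ i, rnorm (row (Pperp w v) i) - ∑ i, rnorm (row e i) ≤
      ∑ i, rdot (row (gradf w) i) (row (RN (Pperp w v)) i) := by
    rw [← Finset.sum_sub_distrib]
    exact Finset.sum_le_sum hrow
  -- Frobenius norm vs sum of row norms
  have h1 : ‖Pperp w v‖ ≤ ∑ i, rnorm (row (Pperp w v) i) := by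
    rw [Aux.norm_eq]
    have hnn : ∀ i ∈ Finset.univ, (0:ℝ) ≤ rnorm (row (Pperp w v) i) :=
      fun i _ => Aux.rnorm_nonneg _
    calc Real.sqrt (∑ i, rdot (row (Pperp w v) i) (row (Pperp w v) i))
        = Real.sqrt (∑ i, rnorm (row (Pperp w v) i) ^ 2) := by
          simp_rw [Aux.rnorm_sq]
      _ ≤ Real.sqrt ((∑ i, rnorm (row (Pperp w v) i)) ^ 2) :=
          Real.sqrt_le_sqrt (Finset.sum_sq_le_sq_sum_of_nonneg hnn)
      _ = ∑ i, rnorm (row (Pperp w v) i) :=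
          Real.sqrt_sq (Finset.sum_nonneg hnn)
  -- triangle inequality
  have hPg : Pperp w (gradf w) = Pperp w v - Pperp w e := by
    rw [he, Aux.Pperp_sub]; abel
  have h2 : ‖Pperp w (gradf w)‖ ≤ ‖Pperp w v‖ + ‖Pperp w e‖ := by
    rw [hPg]; exact norm_sub_le _ _
  -- projection is nonexpansive in Frobenius norm
  have h3 : ‖Pperp w e‖ ≤ ‖e‖ := by
    rw [Aux.norm_eq, Aux.norm_eq]
    apply Real.sqrt_le_sqrt
    apply Finset.sum_le_sum
    intro i _
    rw [Aux.row_Pperp]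
    exact Aux.rdot_pr_self_le (hw i) _
  -- Cauchy-Schwarz: sum of row norms ≤ √m * Frobenius norm
  have h4 : ∑ i, rnorm (row e i) ≤ Real.sqrt m * ‖e‖ := by
    have hc := sq_sum_le_card_mul_sum_sq (s := (Finset.univ : Finset (Fin m)))
      (f := fun i => rnorm (row e i))
    simp only [Finset.card_univ, Fintype.card_fin] at hc
    have hnn : (0:ℝ) ≤ ∑ i, rnorm (row e i) :=
      Finset.sum_nonneg fun i _ => Aux.rnorm_nonneg _
    calc ∑ i, rnorm (row e i)
        = Real.sqrt ((∑ i, rnorm (row e i)) ^ 2) := (Real.sqrt_sq hnn).symm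
      _ ≤ Real.sqrt (m * ∑ i, rnorm (row e i) ^ 2) := by
          apply Real.sqrt_le_sqrt
          exact_mod_cast hc
      _ = Real.sqrt m * ‖e‖ := by
          rw [Aux.norm_eq, Real.sqrt_mul (by positivity)]
          congr 2
          simp_rw [Aux.rnorm_sq]
  have hexp : (Real.sqrt m + 1) * ‖e‖ = Real.sqrt m * ‖e‖ + ‖e‖ := by ring
  rw [hexp]
  linarith
end
end

section
/- Let f : ℝ^{m×n} → ℝ be differentiable, let w be a real m×n matrix with all rows nonzero, let v be any real m×n matrix, and set G := P^{r⊥}_w(∇f(w)), e := v − ∇f(w), and d := RN(P^{r⊥}_w(v)). Then ⟨∇f(w), d⟩ ≥ ‖G‖_{1,2} − 2‖e‖_{1,2}. -/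
open scoped BigOperators RealInnerProductSpace
open Finset MeasureTheory

noncomputable section

-- auxiliary
def vec {n : ℕ} (x : Fin n → ℝ) : EuclideanSpace ℝ (Fin n) := WithLp.toLp 2 x

lemma rdot_eq {n : ℕ} (x y : Fin n → ℝ) : rdot x y = ⟪vec x, vec y⟫ := by
  simp [rdot, vec, PiLp.inner_apply, RCLike.inner_apply, mul_comm]

lemma rnorm_eq {n : ℕ} (x : Fin n → ℝ) : rnorm x = ‖vec x‖ := by
  rw [rnorm, rdot_eq, real_inner_self_eq_norm_sq, Real.sqrt_sq (norm_nonneg _)]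

lemma vec_eq_zero {n : ℕ} (x : Fin n → ℝ) : vec x = 0 ↔ x = 0 := by
  constructor <;> intro h
  · funext j
    have := congrArg (fun y : EuclideanSpace ℝ (Fin n) => y j) h
    simpa [vec] using this
  · ext j
    simp [vec, h]

lemma inner_rows {m n : ℕ} (x y : Mat m n) : ⟪x, y⟫ = ∑ i, rdot (row x i) (row y i) := by
  simp [PiLp.inner_apply, RCLike.inner_apply, rdot, row, Fintype.sum_prod_type, mul_comm]

lemma row_Pperp {m n : ℕ} (w x : Mat m n) (i : Fin m) :
    vec (row (Pperp w x) i) =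
      vec (row x i) - (⟪vec (row x i), vec (row w i)⟫ / ‖vec (row w i)‖ ^ 2) • vec (row w i) := by
  rw [← rdot_eq, ← rnorm_eq]
  ext j
  simp only [vec, row, Pperp, PiLp.sub_apply, PiLp.smul_apply, smul_eq_mul, PiLp.toLp_apply]

lemma row_sub {m n : ℕ} (x y : Mat m n) (i : Fin m) :
    vec (row (x - y) i) = vec (row x i) - vec (row y i) := by
  ext j
  simp [vec, row, PiLp.sub_apply]

lemma row_RN_cases {m n : ℕ} (x : Mat m n) (i : Fin m) :
    (vec (row x i) = 0 ∧ vec (row (RN x) i) = 0) ∨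
    (vec (row x i) ≠ 0 ∧ vec (row (RN x) i) = ‖vec (row x i)‖⁻¹ • vec (row x i)) := by
  by_cases h : row x i = 0
  · refine Or.inl ⟨(vec_eq_zero _).mpr h, ?_⟩
    ext j
    simp [vec, row, RN, h]
  · refine Or.inr ⟨fun hc => h ((vec_eq_zero _).mp hc), ?_⟩
    rw [← rnorm_eq]
    ext j
    simp only [vec, row, RN, h, if_false, PiLp.smul_apply, smul_eq_mul, PiLp.toLp_apply]
    rw [div_eq_inv_mul]

lemma proj_orth {n : ℕ} (w : EuclideanSpace ℝ (Fin n)) (hw : w ≠ 0) (x : EuclideanSpace ℝ (Fin n)) :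
    ⟪x - (⟪x, w⟫ / ‖w‖ ^ 2) • w, w⟫ = 0 := by
  have hw2 : ‖w‖ ^ 2 ≠ 0 := pow_ne_zero _ (norm_ne_zero_iff.mpr hw)
  rw [inner_sub_left, real_inner_smul_left, real_inner_self_eq_norm_sq]
  field_simp
  ring

lemma proj_norm_le {n : ℕ} (w : EuclideanSpace ℝ (Fin n)) (hw : w ≠ 0) (x : EuclideanSpace ℝ (Fin n)) :
    ‖x - (⟪x, w⟫ / ‖w‖ ^ 2) • w‖ ≤ ‖x‖ := by
  set c : ℝ := ⟪x, w⟫ / ‖w‖ ^ 2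
  have hx : x = (x - c • w) + c • w := by abel
  have horth : ⟪x - c • w, c • w⟫ = 0 := by
    rw [real_inner_smul_right, proj_orth w hw x, mul_zero]
  have hsq : ‖x‖ ^ 2 = ‖x - c • w‖ ^ 2 + ‖c • w‖ ^ 2 := by
    conv_lhs => rw [hx]
    rw [norm_add_sq_real, horth]; ring
  nlinarith [norm_nonneg (x - c • w), norm_nonneg x, sq_nonneg ‖c • w‖]

lemma row_key {n : ℕ} (w g v : EuclideanSpace ℝ (Fin n)) (hw : w ≠ 0)
    (pg pv d : EuclideanSpace ℝ (Fin n))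
    (hpg : pg = g - (⟪g, w⟫ / ‖w‖ ^ 2) • w)
    (hpv : pv = v - (⟪v, w⟫ / ‖w‖ ^ 2) • w)
    (hd : (pv = 0 ∧ d = 0) ∨ (pv ≠ 0 ∧ d = ‖pv‖⁻¹ • pv)) :
    ‖pg‖ - 2 * ‖v - g‖ ≤ ⟪g, d⟫ := by
  set e : EuclideanSpace ℝ (Fin n) := v - g with he
  set pe : EuclideanSpace ℝ (Fin n) := e - (⟪e, w⟫ / ‖w‖ ^ 2) • w with hpe
  have hw2 : ‖w‖ ^ 2 ≠ 0 := pow_ne_zero _ (norm_ne_zero_iff.mpr hw)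
  have hdw : ⟪w, d⟫ = 0 := by
    rcases hd with ⟨_, hd⟩ | ⟨_, hd⟩
    · simp [hd]
    · rw [hd, real_inner_smul_right, real_inner_comm, hpv, proj_orth w hw v, mul_zero]
  have hsplit : pg = pv - pe := by
    rw [hpg, hpv, hpe, he, inner_sub_left]
    match_scalars <;> field_simp <;> ring
  have hgd : ⟪g, d⟫ = ⟪pg, d⟫ := by
    have h1 : g - pg = (⟪g, w⟫ / ‖w‖ ^ 2) • w := by rw [hpg]; abel
    have h2 : ⟪g, d⟫ - ⟪pg, d⟫ = ⟪g - pg, d⟫ := (inner_sub_left _ _ _).symm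
    rw [h1, real_inner_smul_left, hdw, mul_zero] at h2
    linarith
  have hpvd : ⟪pv, d⟫ = ‖pv‖ := by
    rcases hd with ⟨h0, hd⟩ | ⟨h0, hd⟩
    · simp [hd, h0]
    · rw [hd, real_inner_smul_right, real_inner_self_eq_norm_sq, sq, ← mul_assoc,
        inv_mul_cancel₀ (norm_ne_zero_iff.mpr h0), one_mul]
  have hd1 : ‖d‖ ≤ 1 := by
    rcases hd with ⟨_, hd⟩ | ⟨h0, hd⟩
    · simp [hd]
    · rw [hd, norm_smul, norm_inv, norm_norm,
        inv_mul_cancel₀ (norm_ne_zero_iff.mpr h0)]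
  have hpe_le : ‖pe‖ ≤ ‖e‖ := proj_norm_le w hw e
  have hped : ⟪pe, d⟫ ≤ ‖e‖ := by
    calc ⟪pe, d⟫ ≤ ‖pe‖ * ‖d‖ := real_inner_le_norm _ _
    _ ≤ ‖e‖ * 1 := mul_le_mul hpe_le hd1 (norm_nonneg _) (norm_nonneg _)
    _ = ‖e‖ := mul_one _
  have hpg_le : ‖pg‖ ≤ ‖pv‖ + ‖e‖ := by
    calc ‖pg‖ = ‖pv - pe‖ := by rw [hsplit]
    _ ≤ ‖pv‖ + ‖pe‖ := norm_sub_le _ _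
    _ ≤ ‖pv‖ + ‖e‖ := by linarith
  have hfin : ⟪g, d⟫ = ‖pv‖ - ⟪pe, d⟫ := by
    rw [hgd, hsplit, inner_sub_left, hpvd]
  rw [hfin]
  linarith

/-- Projected inner-product lower bound in the (1,2)-norm. -/
theorem projected_inner_lower_bound_one_two {m n : ℕ} (f : Mat m n → ℝ)
    (gradf : Mat m n → Mat m n) (hdiff : ∀ u, HasGradientAt f (gradf u) u)
    (w : Mat m n) (hw : ∀ i, row w i ≠ 0) (v : Mat m n) :
    ⟪gradf w, RN (Pperp w v)⟫ ≥
      norm12 (Pperp w (gradf w)) - 2 * norm12 (v - gradf w) := by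
  set g := gradf w with hg
  have hrw : ∀ i, vec (row w i) ≠ 0 := fun i hc => hw i ((vec_eq_zero _).mp hc)
  have key : ∀ i : Fin m,
      rnorm (row (Pperp w g) i) - 2 * rnorm (row (v - g) i) ≤
        rdot (row g i) (row (RN (Pperp w v)) i) := by
    intro i
    rw [rnorm_eq, rnorm_eq, rdot_eq, row_sub]
    exact row_key (vec (row w i)) (vec (row g i)) (vec (row v i)) (hrw i)
      (vec (row (Pperp w g) i)) (vec (row (Pperp w v) i)) (vec (row (RN (Pperp w v)) i))
      (row_Pperp w g i) (row_Pperp w v i) (row_RN_cases (Pperp w v) i)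
  rw [ge_iff_le]
  calc norm12 (Pperp w g) - 2 * norm12 (v - g)
      = ∑ i, (rnorm (row (Pperp w g) i) - 2 * rnorm (row (v - g) i)) := by
        rw [norm12, norm12, Finset.mul_sum, Finset.sum_sub_distrib]
    _ ≤ ∑ i, rdot (row g i) (row (RN (Pperp w v)) i) :=
        Finset.sum_le_sum fun i _ => key i
    _ = ⟪g, RN (Pperp w v)⟫ := (inner_rows _ _).symm
end
end
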